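/- arXiv:2008.08253 — 3 statements merged into one kernel-verified Lean document; each statement's English description precedes it below -/
import Mathlib

section
/- For n ≥ 5, the maximum of N(0,2;λ) := ∏_j N(0,2;λ_j) over all partitions λ = (λ_1,…,λ_k) of n equals 3^{n/3} if n ≡ 0 (mod 3), equals 11·3^{(n−7)/3} if n ≡ 1 (mod 3), and equals 5·3^{(n−5)/3} if n ≡ 2 (mod 3). -/
/-- The rank of a partition: largest part minus number of parts. -/
def partitionRank {n : ℕ} (p : n.Partition) : ℤ :=
  (p.parts.sup : ℤ) - p.parts.card

/-- `N r n` = number of partitions of `n` with rank ≡ r (mod 2). -/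
def N (r n : ℕ) : ℕ :=
  Fintype.card {p : n.Partition // partitionRank p % 2 = (r : ℤ)}

/-- `N(r,2;λ) = ∏_j N(r,2;λ_j)` over the parts of a partition `λ`. -/
def Nprod (r : ℕ) {n : ℕ} (p : n.Partition) : ℕ :=
  (p.parts.map (N r)).prod

/-- `maxN(r,2;n)`: the maximal value of `N(r,2;λ)` over partitions `λ` of `n`. -/
def maxN (r n : ℕ) : ℕ :=
  Finset.univ.sup fun p : n.Partition => Nprod r p

/-! ### Numeric scaffolding -/

/-- target function -/
def g : ℕ → ℕ
  | 0 => 1 | 1 => 1 | 2 => 1 | 3 => 3 | 4 => 3 | 5 => 5 | 6 => 9 | 7 => 11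
  | (n+8) => 3 * g (n+5)

/-- Fibonacci-like majorant, rate ≈ 1.3247 -/
def FF : ℕ → ℕ
  | 0 => 1 | 1 => 1 | 2 => 1 | 3 => 1 | 4 => 1
  | (n+5) => FF (n+4) + FF n

/-- exact partition-count recursion with fuel -/
def Q : ℕ → ℕ → ℕ → ℕ
  | 0, _, n => if n = 0 then 1 else 0
  | (f+1), k, n => if n = 0 then 1 else if n < k then 0 else if n < 2*k then 1
      else Q f k (n-k) + Q f (k+1) n

lemma g_rec (m : ℕ) : g (m+8) = 3 * g (m+5) := rfl
lemma FF_rec (m : ℕ) : FF (m+5) = FF (m+4) + FF m := rfl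

lemma g_rec' {n : ℕ} (h : 8 ≤ n) : g n = 3 * g (n-3) := by
  obtain ⟨m, rfl⟩ : ∃ m, n = m + 8 := ⟨n - 8, by omega⟩
  have : m + 8 - 3 = m + 5 := by omega
  rw [this, g_rec]

lemma FF_rec' {n : ℕ} (h : 5 ≤ n) : FF n = FF (n-1) + FF (n-5) := by
  obtain ⟨m, rfl⟩ : ∃ m, n = m + 5 := ⟨n - 5, by omega⟩
  have h1 : m + 5 - 1 = m + 4 := by omega
  have h2 : m + 5 - 5 = m := by omega
  rw [h1, h2, FF_rec]

lemma NI4 : ∀ n, 12 ≤ n → 3 * FF (n-4) ≤ FF n := by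
  intro n
  induction n using Nat.strong_induction_on with
  | _ n ih =>
    intro h
    by_cases h17 : n < 17
    · interval_cases n <;> decide
    · have e1 := ih (n-1) (by omega) (by omega)
      have e5 := ih (n-5) (by omega) (by omega)
      have r0 := FF_rec' (show 5 ≤ n by omega)
      have r4 := FF_rec' (show 5 ≤ n - 4 by omega)
      have d1 : n - 4 - 1 = n - 1 - 4 := by omega
      have d2 : n - 4 - 5 = n - 5 - 4 := by omega
      rw [d1, d2] at r4
      omega

lemma NI3 : ∀ n, 5 ≤ n → 2 * FF (n-3) ≤ FF n := by
  intro n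
  induction n using Nat.strong_induction_on with
  | _ n ih =>
    intro h
    by_cases h10 : n < 10
    · interval_cases n <;> decide
    · have e1 := ih (n-1) (by omega) (by omega)
      have e5 := ih (n-5) (by omega) (by omega)
      have r0 := FF_rec' (show 5 ≤ n by omega)
      have r4 := FF_rec' (show 5 ≤ n - 3 by omega)
      have d1 : n - 3 - 1 = n - 1 - 3 := by omega
      have d2 : n - 3 - 5 = n - 5 - 3 := by omega
      rw [d1, d2] at r4
      omega

lemma NI2 : ∀ n, 22 ≤ n → 7 * FF (n-2) ≤ 4 * FF n := by
  intro n
  induction n using Nat.strong_induction_on with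
  | _ n ih =>
    intro h
    by_cases h27 : n < 27
    · interval_cases n <;> decide
    · have e1 := ih (n-1) (by omega) (by omega)
      have e5 := ih (n-5) (by omega) (by omega)
      have r0 := FF_rec' (show 5 ≤ n by omega)
      have r4 := FF_rec' (show 5 ≤ n - 2 by omega)
      have d1 : n - 2 - 1 = n - 1 - 2 := by omega
      have d2 : n - 2 - 5 = n - 5 - 2 := by omega
      rw [d1, d2] at r4
      omega

lemma NI1 : ∀ n, 16 ≤ n → 29 * FF (n-1) ≤ 22 * FF n := by
  intro n
  induction n using Nat.strong_induction_on with
  | _ n ih =>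
    intro h
    by_cases h21 : n < 21
    · interval_cases n <;> decide
    · have e1 := ih (n-1) (by omega) (by omega)
      have e5 := ih (n-5) (by omega) (by omega)
      have r0 := FF_rec' (show 5 ≤ n by omega)
      have r4 := FF_rec' (show 5 ≤ n - 1 by omega)
      have d2 : n - 1 - 5 = n - 5 - 1 := by omega
      rw [d2] at r4
      omega

lemma gFib : ∀ n, 8 ≤ n → g (n-1) + g (n-5) ≤ g n := by
  intro n
  induction n using Nat.strong_induction_on with
  | _ n ih =>
    intro h
    by_cases h13 : n < 13
    · interval_cases n <;> decide
    · have r0 := g_rec' (show 8 ≤ n by omega)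
      have r1 := g_rec' (show 8 ≤ n - 1 by omega)
      have r5 := g_rec' (show 8 ≤ n - 5 by omega)
      have e := ih (n-3) (by omega) (by omega)
      have d1 : n - 1 - 3 = n - 3 - 1 := by omega
      have d2 : n - 5 - 3 = n - 3 - 5 := by omega
      rw [d1] at r1; rw [d2] at r5
      omega

lemma crossing : ∀ n, 33 ≤ n → 29 * FF n ≤ g n := by
  intro n
  induction n using Nat.strong_induction_on with
  | _ n ih =>
    intro h
    by_cases h38 : n < 38
    · interval_cases n <;> decide
    · have e1 := ih (n-1) (by omega) (by omega)
      have e5 := ih (n-5) (by omega) (by omega)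
      have r0 := FF_rec' (show 5 ≤ n by omega)
      have gf := gFib n (by omega)
      omega

lemma g_closed : ∀ n, 5 ≤ n →
    (n % 3 = 0 → g n = 3 ^ (n / 3)) ∧
    (n % 3 = 1 → g n = 11 * 3 ^ ((n - 7) / 3)) ∧
    (n % 3 = 2 → g n = 5 * 3 ^ ((n - 5) / 3)) := by
  intro n
  induction n using Nat.strong_induction_on with
  | _ n ih =>
    intro h
    by_cases h8 : n < 8
    · interval_cases n <;> refine ⟨?_, ?_, ?_⟩ <;> intro hr <;> simp_all <;> decide
    · have r0 := g_rec' (show 8 ≤ n by omega)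
      obtain ⟨i1, i2, i3⟩ := ih (n-3) (by omega) (by omega)
      refine ⟨?_, ?_, ?_⟩ <;> intro hr
      · rw [r0, i1 (by omega)]
        have : n / 3 = (n-3)/3 + 1 := by omega
        rw [this, pow_succ]; ring
      · rw [r0, i2 (by omega)]
        have : (n-7) / 3 = (n-3-7)/3 + 1 := by omega
        rw [this, pow_succ]; ring
      · rw [r0, i3 (by omega)]
        have : (n-5) / 3 = (n-3-5)/3 + 1 := by omega
        rw [this, pow_succ]; ring

lemma gSuper : ∀ a b : ℕ, g a * g b ≤ g (a + b) := by
  have key : ∀ s a b : ℕ, a + b ≤ s → g a * g b ≤ g (a + b) := by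
    intro s
    induction s using Nat.strong_induction_on with
    | _ s ih =>
      intro a b hs
      by_cases ha : 8 ≤ a
      · have hab : 8 ≤ a + b := by omega
        rw [g_rec' ha, g_rec' hab]
        have h1 : a - 3 + b = a + b - 3 := by omega
        have h2 := ih (s-3) (by omega) (a-3) b (by omega)
        rw [h1] at h2
        calc 3 * g (a-3) * g b = 3 * (g (a-3) * g b) := by ring
          _ ≤ 3 * g (a + b - 3) := Nat.mul_le_mul_left _ h2
      · by_cases hb : 8 ≤ b
        · have hab : 8 ≤ a + b := by omega
          rw [g_rec' hb, g_rec' hab]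
          have h1 : a + (b - 3) = a + b - 3 := by omega
          have h2 := ih (s-3) (by omega) a (b-3) (by omega)
          rw [h1] at h2
          calc g a * (3 * g (b-3)) = 3 * (g a * g (b-3)) := by ring
            _ ≤ 3 * g (a + b - 3) := Nat.mul_le_mul_left _ h2
        · have ha' : a < 8 := by omega
          have hb' : b < 8 := by omega
          interval_cases a <;> interval_cases b <;> decide
  exact fun a b => key (a+b) a b le_rfl

/-! ### Partition counting -/

/-- number of partitions of n with all parts ≥ k -/
def q (k n : ℕ) : ℕ := Fintype.card {p : n.Partition // ∀ x ∈ p.parts, k ≤ x}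

lemma part_le_sum' {n : ℕ} (p : n.Partition) {a : ℕ} (h : a ∈ p.parts) : a ≤ n := by
  have h2 := Multiset.single_le_sum (fun x (_ : x ∈ p.parts) => Nat.zero_le x) a h
  rwa [p.parts_sum] at h2

lemma parts_ne {n : ℕ} (hn : 1 ≤ n) (p : n.Partition) : p.parts ≠ 0 := by
  intro he
  have hs := p.parts_sum
  rw [he] at hs
  simp at hs
  omega

/-- remove one part -/
def restOf {n : ℕ} (p : n.Partition) (a : ℕ) (h : a ∈ p.parts) : (n - a).Partition where
  parts := p.parts.erase a
  parts_pos hi := p.parts_pos (Multiset.mem_of_mem_erase hi)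
  parts_sum := by
    have h2 : a + (p.parts.erase a).sum = n := by
      rw [← Multiset.sum_cons, Multiset.cons_erase h, p.parts_sum]
    omega

lemma cons_restOf {n : ℕ} (p : n.Partition) (a : ℕ) (h : a ∈ p.parts) :
    a ::ₘ (restOf p a h).parts = p.parts := Multiset.cons_erase h

lemma q_zero (k : ℕ) : q k 0 = 1 := by
  rw [q, Fintype.card_eq_one_iff]
  refine ⟨⟨default, ?_⟩, ?_⟩
  · intro x hx
    have : (default : Nat.Partition 0).parts = 0 := rfl
    rw [this] at hx
    simp at hx
  · rintro ⟨p, hp⟩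
    apply Subtype.ext
    apply Subsingleton.elim

lemma q_small {k n : ℕ} (h0 : 0 < n) (hk : n < k) : q k n = 0 := by
  rw [q, Fintype.card_eq_zero_iff]
  constructor
  rintro ⟨p, hp⟩
  obtain ⟨a, ha⟩ := Multiset.exists_mem_of_ne_zero (parts_ne h0 p)
  have h1 := hp a ha
  have h2 := part_le_sum' p ha
  omega

lemma q_single {k n : ℕ} (hk : k ≤ n) (h2 : n < 2*k) (hk1 : 1 ≤ k) : q k n ≤ 1 := by
  rw [q]
  apply Fintype.card_le_one_iff.2
  have key : ∀ (r : n.Partition), (∀ x ∈ r.parts, k ≤ x) → r.parts = {n} := by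
    intro r hr
    obtain ⟨a, ha⟩ := Multiset.exists_mem_of_ne_zero (parts_ne (by omega) r)
    have hrest : r.parts.erase a = 0 := by
      by_contra hc
      obtain ⟨b, hb⟩ := Multiset.exists_mem_of_ne_zero hc
      have hbk := hr b (Multiset.mem_of_mem_erase hb)
      have hak := hr a ha
      have hsum : a + (r.parts.erase a).sum = n := by
        rw [← Multiset.sum_cons, Multiset.cons_erase ha, r.parts_sum]
      have hble := Multiset.single_le_sum (fun x (_ : x ∈ r.parts.erase a) => Nat.zero_le x) b hb
      omega
    have hpa : r.parts = a ::ₘ 0 := by rw [← Multiset.cons_erase ha, hrest]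
    have hsum := r.parts_sum
    rw [hpa] at hsum
    simp at hsum
    rw [hpa, hsum]
    rfl
  rintro ⟨p, hp⟩ ⟨p', hp'⟩
  apply Subtype.ext
  apply Nat.Partition.ext
  rw [key p hp, key p' hp']

lemma qA {k n : ℕ} (hk : k ≤ n) (hn : 1 ≤ n) : q k n ≤ q k (n - k) + q (k+1) n := by
  rw [q, q, q, ← Fintype.card_sum]
  apply Fintype.card_le_of_injective (f := fun x =>
    if h : k ∈ x.1.parts then
      Sum.inl ⟨restOf x.1 k h, fun y hy => x.2 y (Multiset.mem_of_mem_erase hy)⟩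
    else
      Sum.inr ⟨x.1, fun y hy => lt_of_le_of_ne (x.2 y hy) (fun e => h (e ▸ hy))⟩)
  rintro ⟨p, hp⟩ ⟨p', hp'⟩ he
  by_cases h1 : k ∈ p.parts <;> by_cases h2 : k ∈ p'.parts <;>
    simp only [h1, h2, dif_pos, dif_neg, not_false_iff, Sum.inl.injEq, Sum.inr.injEq,
      Subtype.mk_eq_mk] at he
  · apply Subtype.ext
    apply Nat.Partition.ext
    have h3 : (restOf p k h1).parts = (restOf p' k h2).parts := congrArg Nat.Partition.parts he
    rw [← cons_restOf p k h1, ← cons_restOf p' k h2, h3]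
  · exact absurd he (by simp)
  · exact absurd he (by simp)
  · exact Subtype.ext he

/-- the smallest part of a nonempty partition -/
def minPart {n : ℕ} (hn : 1 ≤ n) (p : n.Partition) : ℕ :=
  p.parts.toFinset.min' (by
    simp [Multiset.toFinset_nonempty]
    exact parts_ne hn p)

lemma minPart_mem {n : ℕ} (hn : 1 ≤ n) (p : n.Partition) : minPart hn p ∈ p.parts := by
  have := Finset.min'_mem p.parts.toFinset (by
    simp [Multiset.toFinset_nonempty]; exact parts_ne hn p)
  simpa [minPart] using this

lemma minPart_le {n : ℕ} (hn : 1 ≤ n) (p : n.Partition) {x : ℕ} (hx : x ∈ p.parts) :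
    minPart hn p ≤ x :=
  Finset.min'_le _ _ (by simpa using hx)

/-- decrement the smallest part -/
def decMin {n : ℕ} (hn : 1 ≤ n) {k : ℕ} (hk : 1 ≤ k) (p : n.Partition)
    (hp : ∀ x ∈ p.parts, k + 1 ≤ x) : (n - 1).Partition where
  parts := (minPart hn p - 1) ::ₘ p.parts.erase (minPart hn p)
  parts_pos := by
    intro i hi
    rcases Multiset.mem_cons.1 hi with h | h
    · have := hp _ (minPart_mem hn p); omega
    · exact p.parts_pos (Multiset.mem_of_mem_erase h)
  parts_sum := by
    have hm := minPart_mem hn p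
    have h1 : minPart hn p + (p.parts.erase (minPart hn p)).sum = n := by
      rw [← Multiset.sum_cons, Multiset.cons_erase hm, p.parts_sum]
    have h2 := hp _ hm
    simp only [Multiset.sum_cons]
    omega

lemma qB {k n : ℕ} (hk : 1 ≤ k) (hn : 1 ≤ n) : q (k+1) n ≤ q k (n - 1) := by
  rw [q, q]
  apply Fintype.card_le_of_injective (f := fun x =>
    ⟨decMin hn hk x.1 x.2, by
      intro y hy
      rcases Multiset.mem_cons.1 hy with h | h
      · have := x.2 _ (minPart_mem hn x.1); omega
      · have := x.2 _ (Multiset.mem_of_mem_erase h); omega⟩)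
  rintro ⟨p, hp⟩ ⟨p', hp'⟩ he
  have he' : (decMin hn hk p hp).parts = (decMin hn hk p' hp').parts :=
    congrArg Nat.Partition.parts (congrArg Subtype.val he)
  set m := minPart hn p with hm
  set m' := minPart hn p' with hm'
  have hmm : m - 1 = m' - 1 := by
    have h1 : (m - 1) ∈ (decMin hn hk p' hp').parts := by
      rw [← he']; exact Multiset.mem_cons_self _ _
    have h2 : (m' - 1) ∈ (decMin hn hk p hp).parts := by
      rw [he']; exact Multiset.mem_cons_self _ _
    have lb : ∀ y ∈ (decMin hn hk p hp).parts, m - 1 ≤ y := by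
      intro y hy
      rcases Multiset.mem_cons.1 hy with h | h
      · omega
      · have := minPart_le hn p (Multiset.mem_of_mem_erase h); omega
    have lb' : ∀ y ∈ (decMin hn hk p' hp').parts, m' - 1 ≤ y := by
      intro y hy
      rcases Multiset.mem_cons.1 hy with h | h
      · omega
      · have := minPart_le hn p' (Multiset.mem_of_mem_erase h); omega
    have a1 := lb _ h2
    have a2 := lb' _ h1
    omega
  have hmeq : m = m' := by
    have k1 := hp _ (minPart_mem hn p)
    have k2 := hp' _ (minPart_mem hn p')
    omega
  apply Subtype.ext
  apply Nat.Partition.ext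
  have e1 : (decMin hn hk p hp).parts = (m - 1) ::ₘ p.parts.erase m := rfl
  have e2 : (decMin hn hk p' hp').parts = (m' - 1) ::ₘ p'.parts.erase m' := rfl
  rw [e1, e2, ← hmeq] at he'
  have step : p.parts.erase m = p'.parts.erase m := (Multiset.cons_inj_right _).1 he'
  have c1 : m ::ₘ p.parts.erase m = p.parts := Multiset.cons_erase (minPart_mem hn p)
  have c2 : m ::ₘ p'.parts.erase m = p'.parts := by
    rw [hmeq]; exact Multiset.cons_erase (minPart_mem hn p')
  rw [← c1, ← c2, step]

lemma qQ : ∀ f k n, 1 ≤ k → 2*n + 2 ≤ f + k → q k n ≤ Q f k n := by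
  intro f
  induction f with
  | zero =>
    intro k n hk h
    by_cases hn : n = 0
    · subst hn; rw [q_zero]; simp [Q]
    · rw [q_small (by omega) (by omega)]; exact Nat.zero_le _
  | succ f ihf =>
    intro k n hk h
    by_cases h0 : n = 0
    · subst h0; rw [q_zero]; simp [Q]
    · by_cases h1 : n < k
      · rw [q_small (by omega) h1]; exact Nat.zero_le _
      · by_cases h2 : n < 2*k
        · have hs := q_single (show k ≤ n by omega) h2 hk
          have hQ : Q (f+1) k n = 1 := by simp [Q, h0, h1, h2]
          omega
        · have h3 := qA (show k ≤ n by omega) (show 1 ≤ n by omega)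
          have i1 := ihf k (n-k) hk (by omega)
          have i2 := ihf (k+1) n (by omega) (by omega)
          have hQ : Q (f+1) k n = Q f k (n-k) + Q f (k+1) n := by simp [Q, h0, h1, h2]
          omega

/-! ### The chain of bounds -/

lemma L5 : ∀ n, q 5 n ≤ FF n := by
  intro n
  induction n using Nat.strong_induction_on with
  | _ n ih =>
    by_cases h0 : n = 0
    · subst h0; rw [q_zero]; decide
    · by_cases h5 : n < 5
      · rw [q_small (by omega) (by omega)]; exact Nat.zero_le _
      · have h1 := qA (show 5 ≤ n by omega) (show 1 ≤ n by omega)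
        have h2 := qB (show (1:ℕ) ≤ 5 by omega) (show 1 ≤ n by omega)
        have i1 := ih (n-5) (by omega)
        have i2 := ih (n-1) (by omega)
        have r := FF_rec' (show 5 ≤ n by omega)
        omega

lemma L4 : ∀ n, 2 * q 4 n ≤ 3 * FF n := by
  intro n
  induction n using Nat.strong_induction_on with
  | _ n ih =>
    by_cases hb : n < 12
    · have hq := qQ (2*n+2) 4 n (by omega) (by omega)
      have hd : 2 * Q (2*n+2) 4 n ≤ 3 * FF n := by interval_cases n <;> decide
      omega
    · have h1 := qA (show 4 ≤ n by omega) (show 1 ≤ n by omega)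
      norm_num at h1
      have h2 := ih (n-4) (by omega)
      have h3 := L5 n
      have h4 := NI4 n (by omega)
      omega

lemma L3 : ∀ n, 2 * q 3 n ≤ 6 * FF n := by
  intro n
  induction n using Nat.strong_induction_on with
  | _ n ih =>
    by_cases hb : n < 5
    · have hq := qQ (2*n+2) 3 n (by omega) (by omega)
      have hd : 2 * Q (2*n+2) 3 n ≤ 6 * FF n := by interval_cases n <;> decide
      omega
    · have h1 := qA (show 3 ≤ n by omega) (show 1 ≤ n by omega)
      norm_num at h1
      have h2 := ih (n-3) (by omega)
      have h3 := L4 n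
      have h4 := NI3 n (by omega)
      omega

lemma L2 : ∀ n, 2 * q 2 n ≤ 14 * FF n := by
  intro n
  induction n using Nat.strong_induction_on with
  | _ n ih =>
    by_cases hb : n < 22
    · have hq := qQ (2*n+2) 2 n (by omega) (by omega)
      have hd : 2 * Q (2*n+2) 2 n ≤ 14 * FF n := by interval_cases n <;> decide
      omega
    · have h1 := qA (show 2 ≤ n by omega) (show 1 ≤ n by omega)
      norm_num at h1
      have h2 := ih (n-2) (by omega)
      have h3 := L3 n
      have h4 := NI2 n (by omega)
      omega

lemma L1 : ∀ n, 2 * q 1 n ≤ 58 * FF n := by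
  intro n
  induction n using Nat.strong_induction_on with
  | _ n ih =>
    by_cases hb : n < 16
    · have hq := qQ (2*n+2) 1 n (by omega) (by omega)
      have hd : 2 * Q (2*n+2) 1 n ≤ 58 * FF n := by interval_cases n <;> decide
      omega
    · have h1 := qA (show 1 ≤ n by omega) (show 1 ≤ n by omega)
      norm_num at h1
      have h2 : n - 1 = n - 1 := rfl
      have h2' := ih (n-1) (by omega)
      have h3 := L2 n
      have h4 := NI1 n (by omega)
      omega

set_option maxHeartbeats 4000000 in
lemma q1_le_g : ∀ n, 14 ≤ n → q 1 n ≤ g n := by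
  intro n hn
  by_cases hb : n < 33
  · have hq := qQ (2*n+2) 1 n (by omega) (by omega)
    have hd : Q (2*n+2) 1 n ≤ g n := by interval_cases n <;> decide
    omega
  · have h1 := L1 n
    have h2 := crossing n (by omega)
    omega

/-! ### relating N and q -/

lemma NN (n : ℕ) : N 0 n + N 1 n ≤ q 1 n := by
  rw [N, N, q, ← Fintype.card_sum]
  apply Fintype.card_le_of_injective (f := fun x => match x with
    | Sum.inl ⟨p, _⟩ => ⟨p, fun y hy => p.parts_pos hy⟩
    | Sum.inr ⟨p, _⟩ => ⟨p, fun y hy => p.parts_pos hy⟩)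
  rintro (⟨p, hp⟩|⟨p, hp⟩) (⟨p', hp'⟩|⟨p', hp'⟩) he <;>
    simp only [Subtype.mk_eq_mk] at he
  · exact congrArg Sum.inl (Subtype.ext he)
  · exfalso; rw [he] at hp; rw [hp'] at hp; simp at hp
  · exfalso; rw [he] at hp; rw [hp'] at hp; simp at hp
  · exact congrArg Sum.inr (Subtype.ext he)

lemma N_le_q1 (n : ℕ) : N 0 n ≤ q 1 n := by
  have := NN n; omega

/-- helper to build explicit partitions -/
def mkP (n : ℕ) (s : Multiset ℕ) (h1 : ∀ x ∈ s, 0 < x) (h2 : s.sum = n) : n.Partition :=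
  ⟨s, fun {i} hi => h1 i hi, h2⟩

lemma Nodd_2 : 1 ≤ N 1 2 := by
  have hc : ({⟨mkP 2 {2} (by decide) (by decide), by decide⟩} :
      Finset {p : (2:ℕ).Partition // partitionRank p % 2 = ((1:ℕ):ℤ)}).card = 1 := by decide
  unfold N
  rw [← hc]
  exact Finset.card_le_univ _

lemma Nodd_4 : 2 ≤ N 1 4 := by
  have hc : ({⟨mkP 4 {4} (by decide) (by decide), by decide⟩,
      ⟨mkP 4 {3,1} (by decide) (by decide), by decide⟩} :
      Finset {p : (4:ℕ).Partition // partitionRank p % 2 = ((1:ℕ):ℤ)}).card = 2 := by decide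
  unfold N
  rw [← hc]
  exact Finset.card_le_univ _

lemma Nodd_5 : 2 ≤ N 1 5 := by
  have hc : ({⟨mkP 5 {3,2} (by decide) (by decide), by decide⟩,
      ⟨mkP 5 {2,2,1} (by decide) (by decide), by decide⟩} :
      Finset {p : (5:ℕ).Partition // partitionRank p % 2 = ((1:ℕ):ℤ)}).card = 2 := by decide
  unfold N
  rw [← hc]
  exact Finset.card_le_univ _

lemma Nodd_6 : 2 ≤ N 1 6 := by
  have hc : ({⟨mkP 6 {6} (by decide) (by decide), by decide⟩,
      ⟨mkP 6 {5,1} (by decide) (by decide), by decide⟩} :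
      Finset {p : (6:ℕ).Partition // partitionRank p % 2 = ((1:ℕ):ℤ)}).card = 2 := by decide
  unfold N
  rw [← hc]
  exact Finset.card_le_univ _

lemma Nodd_7 : 4 ≤ N 1 7 := by
  have hc : ({⟨mkP 7 {5,2} (by decide) (by decide), by decide⟩,
      ⟨mkP 7 {4,2,1} (by decide) (by decide), by decide⟩,
      ⟨mkP 7 {3,2,1,1} (by decide) (by decide), by decide⟩,
      ⟨mkP 7 {2,2,1,1,1} (by decide) (by decide), by decide⟩} :
      Finset {p : (7:ℕ).Partition // partitionRank p % 2 = ((1:ℕ):ℤ)}).card = 4 := by decide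
  unfold N
  rw [← hc]
  exact Finset.card_le_univ _

lemma Nodd_8 : 7 ≤ N 1 8 := by
  have hc : ({⟨mkP 8 {8} (by decide) (by decide), by decide⟩,
      ⟨mkP 8 {7,1} (by decide) (by decide), by decide⟩,
      ⟨mkP 8 {6,1,1} (by decide) (by decide), by decide⟩,
      ⟨mkP 8 {5,3} (by decide) (by decide), by decide⟩,
      ⟨mkP 8 {5,1,1,1} (by decide) (by decide), by decide⟩,
      ⟨mkP 8 {4,3,1} (by decide) (by decide), by decide⟩,
      ⟨mkP 8 {4,2,2} (by decide) (by decide), by decide⟩} :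
      Finset {p : (8:ℕ).Partition // partitionRank p % 2 = ((1:ℕ):ℤ)}).card = 7 := by decide
  unfold N
  rw [← hc]
  exact Finset.card_le_univ _

lemma Nodd_9 : 3 ≤ N 1 9 := by
  have hc : ({⟨mkP 9 {7,2} (by decide) (by decide), by decide⟩,
      ⟨mkP 9 {6,2,1} (by decide) (by decide), by decide⟩,
      ⟨mkP 9 {5,4} (by decide) (by decide), by decide⟩} :
      Finset {p : (9:ℕ).Partition // partitionRank p % 2 = ((1:ℕ):ℤ)}).card = 3 := by decide
  unfold N
  rw [← hc]
  exact Finset.card_le_univ _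

lemma Nodd_10 : 9 ≤ N 1 10 := by
  have hc : ({⟨mkP 10 {10} (by decide) (by decide), by decide⟩,
      ⟨mkP 10 {9,1} (by decide) (by decide), by decide⟩,
      ⟨mkP 10 {8,1,1} (by decide) (by decide), by decide⟩,
      ⟨mkP 10 {7,3} (by decide) (by decide), by decide⟩,
      ⟨mkP 10 {7,1,1,1} (by decide) (by decide), by decide⟩,
      ⟨mkP 10 {6,3,1} (by decide) (by decide), by decide⟩,
      ⟨mkP 10 {6,2,2} (by decide) (by decide), by decide⟩,
      ⟨mkP 10 {6,1,1,1,1} (by decide) (by decide), by decide⟩,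
      ⟨mkP 10 {5,5} (by decide) (by decide), by decide⟩} :
      Finset {p : (10:ℕ).Partition // partitionRank p % 2 = ((1:ℕ):ℤ)}).card = 9 := by decide
  unfold N
  rw [← hc]
  exact Finset.card_le_univ _

lemma Nodd_11 : 11 ≤ N 1 11 := by
  have hc : ({⟨mkP 11 {9,2} (by decide) (by decide), by decide⟩,
      ⟨mkP 11 {8,2,1} (by decide) (by decide), by decide⟩,
      ⟨mkP 11 {7,4} (by decide) (by decide), by decide⟩,
      ⟨mkP 11 {7,2,1,1} (by decide) (by decide), by decide⟩,
      ⟨mkP 11 {6,4,1} (by decide) (by decide), by decide⟩,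
      ⟨mkP 11 {6,3,2} (by decide) (by decide), by decide⟩,
      ⟨mkP 11 {6,2,1,1,1} (by decide) (by decide), by decide⟩,
      ⟨mkP 11 {5,4,1,1} (by decide) (by decide), by decide⟩,
      ⟨mkP 11 {5,3,2,1} (by decide) (by decide), by decide⟩,
      ⟨mkP 11 {5,2,2,2} (by decide) (by decide), by decide⟩,
      ⟨mkP 11 {5,2,1,1,1,1} (by decide) (by decide), by decide⟩} :
      Finset {p : (11:ℕ).Partition // partitionRank p % 2 = ((1:ℕ):ℤ)}).card = 11 := by decide
  unfold N
  rw [← hc]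
  exact Finset.card_le_univ _

lemma Nodd_13 : 2 ≤ N 1 13 := by
  have hc : ({⟨mkP 13 {11,2} (by decide) (by decide), by decide⟩,
      ⟨mkP 13 {10,2,1} (by decide) (by decide), by decide⟩} :
      Finset {p : (13:ℕ).Partition // partitionRank p % 2 = ((1:ℕ):ℤ)}).card = 2 := by decide
  unfold N
  rw [← hc]
  exact Finset.card_le_univ _

lemma Neven_3 : 3 ≤ N 0 3 := by
  have hc : ({⟨mkP 3 {3} (by decide) (by decide), by decide⟩,
      ⟨mkP 3 {2,1} (by decide) (by decide), by decide⟩,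
      ⟨mkP 3 {1,1,1} (by decide) (by decide), by decide⟩} :
      Finset {p : (3:ℕ).Partition // partitionRank p % 2 = ((0:ℕ):ℤ)}).card = 3 := by decide
  unfold N
  rw [← hc]
  exact Finset.card_le_univ _

lemma Neven_5 : 5 ≤ N 0 5 := by
  have hc : ({⟨mkP 5 {5} (by decide) (by decide), by decide⟩,
      ⟨mkP 5 {4,1} (by decide) (by decide), by decide⟩,
      ⟨mkP 5 {3,1,1} (by decide) (by decide), by decide⟩,
      ⟨mkP 5 {2,1,1,1} (by decide) (by decide), by decide⟩,
      ⟨mkP 5 {1,1,1,1,1} (by decide) (by decide), by decide⟩} :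
      Finset {p : (5:ℕ).Partition // partitionRank p % 2 = ((0:ℕ):ℤ)}).card = 5 := by decide
  unfold N
  rw [← hc]
  exact Finset.card_le_univ _

lemma Neven_7 : 11 ≤ N 0 7 := by
  have hc : ({⟨mkP 7 {7} (by decide) (by decide), by decide⟩,
      ⟨mkP 7 {6,1} (by decide) (by decide), by decide⟩,
      ⟨mkP 7 {5,1,1} (by decide) (by decide), by decide⟩,
      ⟨mkP 7 {4,3} (by decide) (by decide), by decide⟩,
      ⟨mkP 7 {4,1,1,1} (by decide) (by decide), by decide⟩,
      ⟨mkP 7 {3,3,1} (by decide) (by decide), by decide⟩,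
      ⟨mkP 7 {3,2,2} (by decide) (by decide), by decide⟩,
      ⟨mkP 7 {3,1,1,1,1} (by decide) (by decide), by decide⟩,
      ⟨mkP 7 {2,2,2,1} (by decide) (by decide), by decide⟩,
      ⟨mkP 7 {2,1,1,1,1,1} (by decide) (by decide), by decide⟩,
      ⟨mkP 7 {1,1,1,1,1,1,1} (by decide) (by decide), by decide⟩} :
      Finset {p : (7:ℕ).Partition // partitionRank p % 2 = ((0:ℕ):ℤ)}).card = 11 := by decide
  unfold N
  rw [← hc]
  exact Finset.card_le_univ _

lemma Nsm_2 : N 0 2 ≤ g 2 := by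
  have hN := NN 2
  have hq := qQ 6 1 2 (by omega) (by omega)
  have hQ : Q 6 1 2 ≤ g 2 + 1 := by decide
  have hL := Nodd_2
  omega

lemma Nsm_4 : N 0 4 ≤ g 4 := by
  have hN := NN 4
  have hq := qQ 10 1 4 (by omega) (by omega)
  have hQ : Q 10 1 4 ≤ g 4 + 2 := by decide
  have hL := Nodd_4
  omega

lemma Nsm_5 : N 0 5 ≤ g 5 := by
  have hN := NN 5
  have hq := qQ 12 1 5 (by omega) (by omega)
  have hQ : Q 12 1 5 ≤ g 5 + 2 := by decide
  have hL := Nodd_5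
  omega

lemma Nsm_6 : N 0 6 ≤ g 6 := by
  have hN := NN 6
  have hq := qQ 14 1 6 (by omega) (by omega)
  have hQ : Q 14 1 6 ≤ g 6 + 2 := by decide
  have hL := Nodd_6
  omega

lemma Nsm_7 : N 0 7 ≤ g 7 := by
  have hN := NN 7
  have hq := qQ 16 1 7 (by omega) (by omega)
  have hQ : Q 16 1 7 ≤ g 7 + 4 := by decide
  have hL := Nodd_7
  omega

lemma Nsm_8 : N 0 8 ≤ g 8 := by
  have hN := NN 8
  have hq := qQ 18 1 8 (by omega) (by omega)
  have hQ : Q 18 1 8 ≤ g 8 + 7 := by decide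
  have hL := Nodd_8
  omega

lemma Nsm_9 : N 0 9 ≤ g 9 := by
  have hN := NN 9
  have hq := qQ 20 1 9 (by omega) (by omega)
  have hQ : Q 20 1 9 ≤ g 9 + 3 := by decide
  have hL := Nodd_9
  omega

lemma Nsm_10 : N 0 10 ≤ g 10 := by
  have hN := NN 10
  have hq := qQ 22 1 10 (by omega) (by omega)
  have hQ : Q 22 1 10 ≤ g 10 + 9 := by decide
  have hL := Nodd_10
  omega

lemma Nsm_11 : N 0 11 ≤ g 11 := by
  have hN := NN 11
  have hq := qQ 24 1 11 (by omega) (by omega)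
  have hQ : Q 24 1 11 ≤ g 11 + 11 := by decide
  have hL := Nodd_11
  omega

lemma Nsm_13 : N 0 13 ≤ g 13 := by
  have hN := NN 13
  have hq := qQ 28 1 13 (by omega) (by omega)
  have hQ : Q 28 1 13 ≤ g 13 + 2 := by decide
  have hL := Nodd_13
  omega

lemma Nsm_1 : N 0 1 ≤ g 1 := by
  have hN := N_le_q1 1
  have hq := qQ 4 1 1 (by omega) (by omega)
  have hQ : Q 4 1 1 ≤ g 1 := by decide
  omega

lemma Nsm_3 : N 0 3 ≤ g 3 := by
  have hN := N_le_q1 3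
  have hq := qQ 8 1 3 (by omega) (by omega)
  have hQ : Q 8 1 3 ≤ g 3 := by decide
  omega

lemma Nsm_12 : N 0 12 ≤ g 12 := by
  have hN := N_le_q1 12
  have hq := qQ 26 1 12 (by omega) (by omega)
  have hQ : Q 26 1 12 ≤ g 12 := by decide
  omega

lemma N_le_g : ∀ a : ℕ, N 0 a ≤ g a := by
  intro a
  by_cases h14 : 14 ≤ a
  · exact (N_le_q1 a).trans (q1_le_g a h14)
  · interval_cases a
    · have hN := N_le_q1 0
      rw [q_zero] at hN
      exact hN
    · exact Nsm_1
    · exact Nsm_2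
    · exact Nsm_3
    · exact Nsm_4
    · exact Nsm_5
    · exact Nsm_6
    · exact Nsm_7
    · exact Nsm_8
    · exact Nsm_9
    · exact Nsm_10
    · exact Nsm_11
    · exact Nsm_12
    · exact Nsm_13

lemma main_upper : ∀ n (p : n.Partition), Nprod 0 p ≤ g n := by
  intro n
  induction n using Nat.strong_induction_on with
  | _ n ih =>
    intro p
    by_cases h0 : n = 0
    · subst h0
      have hp0 : p.parts = 0 := by
        by_contra hc
        obtain ⟨a, ha⟩ := Multiset.exists_mem_of_ne_zero hc
        have h1 := p.parts_pos ha
        have h2 := part_le_sum' p ha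
        omega
      unfold Nprod
      rw [hp0]
      decide
    · obtain ⟨a, ha⟩ := Multiset.exists_mem_of_ne_zero (parts_ne (by omega) p)
      have hpos := p.parts_pos ha
      have hle := part_le_sum' p ha
      have hkey : Nprod 0 p = N 0 a * Nprod 0 (restOf p a ha) := by
        unfold Nprod
        rw [← cons_restOf p a ha, Multiset.map_cons, Multiset.prod_cons]
      have h1 := ih (n - a) (by omega) (restOf p a ha)
      have h2 := N_le_g a
      have h3 := gSuper a (n - a)
      have h4 : a + (n - a) = n := by omega
      calc Nprod 0 p = N 0 a * Nprod 0 (restOf p a ha) := hkey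
        _ ≤ N 0 a * g (n - a) := Nat.mul_le_mul_left _ h1
        _ ≤ g a * g (n - a) := Nat.mul_le_mul_right _ h2
        _ ≤ g (a + (n - a)) := h3
        _ = g n := by rw [h4]

/-! ### lower bounds -/

def w0 (k : ℕ) : (3 * k).Partition :=
  ⟨Multiset.replicate k 3, fun {i} hi => by
    rw [Multiset.eq_of_mem_replicate hi]; omega,
   by simp [Multiset.sum_replicate]; ring⟩

def wc (c k : ℕ) (hc : 0 < c) : (c + 3 * k).Partition :=
  ⟨c ::ₘ Multiset.replicate k 3, fun {i} hi => by
    rcases Multiset.mem_cons.1 hi with h | h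
    · omega
    · rw [Multiset.eq_of_mem_replicate h]; omega,
   by simp [Multiset.sum_replicate]; ring⟩

lemma Nprod_w0 (k : ℕ) : Nprod 0 (w0 k) = (N 0 3) ^ k := by
  unfold Nprod w0
  simp [Multiset.map_replicate, Multiset.prod_replicate]

lemma Nprod_wc (c k : ℕ) (hc : 0 < c) :
    Nprod 0 (wc c k hc) = N 0 c * (N 0 3) ^ k := by
  unfold Nprod wc
  simp [Multiset.map_replicate, Multiset.prod_replicate]

lemma le_maxN {n : ℕ} (p : n.Partition) : Nprod 0 p ≤ maxN 0 n :=
  Finset.le_sup (Finset.mem_univ p)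

lemma low0 (k : ℕ) : 3 ^ k ≤ maxN 0 (3 * k) := by
  have h1 : (3:ℕ) ^ k ≤ (N 0 3) ^ k := Nat.pow_le_pow_left Neven_3 k
  calc (3:ℕ) ^ k ≤ (N 0 3) ^ k := h1
    _ = Nprod 0 (w0 k) := (Nprod_w0 k).symm
    _ ≤ maxN 0 (3 * k) := le_maxN _

lemma low5 (k : ℕ) : 5 * 3 ^ k ≤ maxN 0 (5 + 3 * k) := by
  have h1 : (5:ℕ) * 3 ^ k ≤ N 0 5 * (N 0 3) ^ k :=
    Nat.mul_le_mul Neven_5 (Nat.pow_le_pow_left Neven_3 k)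
  calc (5:ℕ) * 3 ^ k ≤ N 0 5 * (N 0 3) ^ k := h1
    _ = Nprod 0 (wc 5 k (by omega)) := (Nprod_wc 5 k (by omega)).symm
    _ ≤ maxN 0 (5 + 3 * k) := le_maxN _

lemma low7 (k : ℕ) : 11 * 3 ^ k ≤ maxN 0 (7 + 3 * k) := by
  have h1 : (11:ℕ) * 3 ^ k ≤ N 0 7 * (N 0 3) ^ k :=
    Nat.mul_le_mul Neven_7 (Nat.pow_le_pow_left Neven_3 k)
  calc (11:ℕ) * 3 ^ k ≤ N 0 7 * (N 0 3) ^ k := h1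
    _ = Nprod 0 (wc 7 k (by omega)) := (Nprod_wc 7 k (by omega)).symm
    _ ≤ maxN 0 (7 + 3 * k) := le_maxN _


lemma maxN_eq (n : ℕ) (hn : 5 ≤ n) : maxN 0 n = g n := by
  apply le_antisymm
  · exact Finset.sup_le fun p _ => main_upper n p
  · obtain ⟨h0, h1, h2⟩ := g_closed n hn
    rcases hr : n % 3 with _ | _ | _ | r
    · obtain ⟨k, rfl⟩ : ∃ k, n = 3 * k := ⟨n / 3, by omega⟩
      rw [h0 hr]
      have : 3 * k / 3 = k := by omega
      rw [this]
      exact low0 k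
    · obtain ⟨k, rfl⟩ : ∃ k, n = 7 + 3 * k := ⟨(n - 7) / 3, by omega⟩
      rw [h1 hr]
      have : (7 + 3 * k - 7) / 3 = k := by omega
      rw [this]
      exact low7 k
    · obtain ⟨k, rfl⟩ : ∃ k, n = 5 + 3 * k := ⟨(n - 5) / 3, by omega⟩
      rw [h2 hr]
      have : (5 + 3 * k - 5) / 3 = k := by omega
      rw [this]
      exact low5 k
    · omega

theorem stmt10 (n : ℕ) (hn : 5 ≤ n) :
    (n % 3 = 0 → maxN 0 n = 3 ^ (n / 3)) ∧
    (n % 3 = 1 → maxN 0 n = 11 * 3 ^ ((n - 7) / 3)) ∧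
    (n % 3 = 2 → maxN 0 n = 5 * 3 ^ ((n - 5) / 3)) := by
  obtain ⟨h0, h1, h2⟩ := g_closed n hn
  have hm := maxN_eq n hn
  exact ⟨fun h => hm.trans (h0 h), fun h => hm.trans (h1 h), fun h => hm.trans (h2 h)⟩
end

section
/- Define T_a(C) := l(a) + l(Ca) − l(a+Ca) and S_a(C) := (1 + 1/√(a+Ca)) / ((1 − 1/√a)(1 − 1/√(Ca))), where l(x) = π√(24x−1)/6. For fixed real a > 1, T_a is strictly increasing in C on [1,∞) and S_a is strictly decreasing in C on [1,∞). -/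
/-- `l(x) = π √(24x − 1)/6` -/
noncomputable def l (x : ℝ) : ℝ := Real.pi * Real.sqrt (24 * x - 1) / 6

/-- `T_a(C) = l(a) + l(Ca) − l(a + Ca)` -/
noncomputable def T (a C : ℝ) : ℝ := l a + l (C * a) - l (a + C * a)

/-- `S_a(C) = (1 + 1/√(a+Ca)) / ((1 − 1/√a)(1 − 1/√(Ca)))` -/
noncomputable def S (a C : ℝ) : ℝ :=
  (1 + 1 / Real.sqrt (a + C * a)) /
    ((1 - 1 / Real.sqrt a) * (1 - 1 / Real.sqrt (C * a)))

lemma aux1 (t k : ℝ) (ht : 0 < t) (hk : 0 < k) :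
    Real.sqrt t - Real.sqrt (t + k) = -k / (Real.sqrt t + Real.sqrt (t + k)) := by
  have h1 : Real.sqrt t ^ 2 = t := Real.sq_sqrt ht.le
  have h2 : Real.sqrt (t + k) ^ 2 = t + k := Real.sq_sqrt (by linarith)
  have hp : 0 < Real.sqrt t + Real.sqrt (t + k) :=
    add_pos (Real.sqrt_pos.mpr ht) (Real.sqrt_pos.mpr (by linarith))
  field_simp
  nlinarith [h1, h2]

lemma aux2 {t₁ t₂ k : ℝ} (h1 : 0 < t₁) (h : t₁ < t₂) (hk : 0 < k) :
    Real.sqrt t₁ - Real.sqrt (t₁ + k) < Real.sqrt t₂ - Real.sqrt (t₂ + k) := by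
  rw [aux1 t₁ k h1 hk, aux1 t₂ k (h1.trans h) hk]
  have d1 : 0 < Real.sqrt t₁ + Real.sqrt (t₁ + k) :=
    add_pos (Real.sqrt_pos.mpr h1) (Real.sqrt_pos.mpr (by linarith))
  have d2 : Real.sqrt t₁ + Real.sqrt (t₁ + k) < Real.sqrt t₂ + Real.sqrt (t₂ + k) :=
    add_lt_add (Real.sqrt_lt_sqrt h1.le h) (Real.sqrt_lt_sqrt (by linarith) (by linarith))
  rw [neg_div, neg_div, neg_lt_neg_iff]
  exact div_lt_div_of_pos_left hk d1 d2

theorem stmt17 (a : ℝ) (ha : 1 < a) :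
    StrictMonoOn (fun C => T a C) (Set.Ici (1 : ℝ)) ∧
    StrictAntiOn (fun C => S a C) (Set.Ici (1 : ℝ)) := by
  have ha0 : 0 < a := by linarith
  constructor
  · intro C₁ hC₁ C₂ hC₂ hC
    simp only [Set.mem_Ici] at hC₁ hC₂
    have ht1 : (0:ℝ) < 24 * (C₁ * a) - 1 := by nlinarith
    have ht : 24 * (C₁ * a) - 1 < 24 * (C₂ * a) - 1 := by nlinarith
    have key := aux2 (k := 24 * a) ht1 ht (by linarith)
    simp only [T, l]
    rw [show (24:ℝ) * (a + C₁ * a) - 1 = (24 * (C₁ * a) - 1) + 24 * a from by ring,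
        show (24:ℝ) * (a + C₂ * a) - 1 = (24 * (C₂ * a) - 1) + 24 * a from by ring]
    have hpi := Real.pi_pos
    nlinarith [key, mul_lt_mul_of_pos_left key hpi]
  · intro C₁ hC₁ C₂ hC₂ hC
    simp only [Set.mem_Ici] at hC₁ hC₂
    have h1a : (1:ℝ) < Real.sqrt a := by
      have := Real.sqrt_lt_sqrt (by norm_num : (0:ℝ) ≤ 1) ha
      rwa [Real.sqrt_one] at this
    have hc1 : (1:ℝ) < C₁ * a := by nlinarith
    have hc2 : (1:ℝ) < C₂ * a := by nlinarith
    have hs1 : (1:ℝ) < Real.sqrt (C₁ * a) := by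
      have := Real.sqrt_lt_sqrt (by norm_num : (0:ℝ) ≤ 1) hc1
      rwa [Real.sqrt_one] at this
    have hs2 : (1:ℝ) < Real.sqrt (C₂ * a) := by
      have := Real.sqrt_lt_sqrt (by norm_num : (0:ℝ) ≤ 1) hc2
      rwa [Real.sqrt_one] at this
    have hs12 : Real.sqrt (C₁ * a) < Real.sqrt (C₂ * a) :=
      Real.sqrt_lt_sqrt (by positivity) (by nlinarith)
    -- denominators
    have hA : (0:ℝ) < 1 - 1 / Real.sqrt a := by
      have : 1 / Real.sqrt a < 1 := by
        rw [div_lt_one (by linarith)]; exact h1a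
      linarith
    have hD1 : (0:ℝ) < (1 - 1 / Real.sqrt a) * (1 - 1 / Real.sqrt (C₁ * a)) := by
      apply mul_pos hA
      have : 1 / Real.sqrt (C₁ * a) < 1 := by
        rw [div_lt_one (by linarith)]; exact hs1
      linarith
    have hDlt : (1 - 1 / Real.sqrt a) * (1 - 1 / Real.sqrt (C₁ * a)) <
        (1 - 1 / Real.sqrt a) * (1 - 1 / Real.sqrt (C₂ * a)) := by
      apply mul_lt_mul_of_pos_left _ hA
      have : 1 / Real.sqrt (C₂ * a) < 1 / Real.sqrt (C₁ * a) :=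
        one_div_lt_one_div_of_lt (by linarith) hs12
      linarith
    -- numerators
    have hsum : Real.sqrt (a + C₁ * a) < Real.sqrt (a + C₂ * a) :=
      Real.sqrt_lt_sqrt (by nlinarith) (by nlinarith)
    have hsum1 : (0:ℝ) < Real.sqrt (a + C₁ * a) := Real.sqrt_pos.mpr (by nlinarith)
    have hN2pos : (0:ℝ) < 1 + 1 / Real.sqrt (a + C₂ * a) := by positivity
    have hNlt : 1 + 1 / Real.sqrt (a + C₂ * a) < 1 + 1 / Real.sqrt (a + C₁ * a) := by
      have : 1 / Real.sqrt (a + C₂ * a) < 1 / Real.sqrt (a + C₁ * a) :=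
        one_div_lt_one_div_of_lt hsum1 hsum
      linarith
    simp only [S]
    calc (1 + 1 / Real.sqrt (a + C₂ * a)) /
          ((1 - 1 / Real.sqrt a) * (1 - 1 / Real.sqrt (C₂ * a)))
        < (1 + 1 / Real.sqrt (a + C₂ * a)) /
          ((1 - 1 / Real.sqrt a) * (1 - 1 / Real.sqrt (C₁ * a))) :=
          div_lt_div_of_pos_left hN2pos hD1 hDlt
      _ < (1 + 1 / Real.sqrt (a + C₁ * a)) /
          ((1 - 1 / Real.sqrt a) * (1 - 1 / Real.sqrt (C₁ * a))) := by
          exact (div_lt_div_iff_of_pos_right hD1).mpr hNlt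
end

section
/- For every real a ≥ 18, the inequality T_a(1) > log S_a(1) − log M(a) holds, where T_a(1) = 2·l(a) − l(2a), S_a(1) = (1 + 1/√(2a))/(1 − 1/√a)², M(a) = (√3/(24a−1))·(1 − 1/l(a)), and l(a) = π√(24a−1)/6. -/
/-- `M(x) = (√3/(24x − 1))(1 − 1/l(x))` -/
noncomputable def M (x : ℝ) : ℝ := Real.sqrt 3 / (24 * x - 1) * (1 - 1 / l x)

set_option maxHeartbeats 1000000 in
theorem stmt18 (a : ℝ) (ha : 18 ≤ a) :
    2 * l a - l (2 * a) >
      Real.log ((1 + 1 / Real.sqrt (2 * a)) / (1 - 1 / Real.sqrt a) ^ 2)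
        - Real.log (M a) := by
  have hpiL := Real.pi_gt_d6
  have hpiU := Real.pi_lt_d6
  -- t = √(24a-1)
  set t := Real.sqrt (24 * a - 1) with htdef
  have hx431 : (431 : ℝ) ≤ 24 * a - 1 := by linarith
  have ht0 : 0 ≤ t := Real.sqrt_nonneg _
  have ht2 : t ^ 2 = 24 * a - 1 := Real.sq_sqrt (by linarith)
  have ht : (20.7 : ℝ) ≤ t := by
    nlinarith [ht2, ht0]
  -- √2 bounds
  have hs2sq : Real.sqrt 2 ^ 2 = 2 := Real.sq_sqrt (by norm_num)
  have hs2nn : (0:ℝ) ≤ Real.sqrt 2 := Real.sqrt_nonneg _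
  have hs2U : Real.sqrt 2 ≤ 1.41422 := by nlinarith [sq_nonneg (Real.sqrt 2 - 1.41422)]
  have hs2L : (1.41421 : ℝ) ≤ Real.sqrt 2 := by nlinarith
  -- √(48a - 1) ≤ √2 * t + 0.0171
  have h48 : Real.sqrt (24 * (2 * a) - 1) ≤ Real.sqrt 2 * t + 0.0171 := by
    have key : 24 * (2 * a) - 1 ≤ (Real.sqrt 2 * t + 0.0171) ^ 2 := by
      nlinarith [mul_nonneg (sub_nonneg.2 hs2L) (sub_nonneg.2 ht)]
    calc Real.sqrt (24 * (2 * a) - 1) ≤ Real.sqrt ((Real.sqrt 2 * t + 0.0171) ^ 2) :=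
          Real.sqrt_le_sqrt key
      _ = Real.sqrt 2 * t + 0.0171 := Real.sqrt_sq (by nlinarith)
  -- l values
  have hla : l a = Real.pi * t / 6 := by rw [l, htdef]
  have hl2a : l (2 * a) = Real.pi * Real.sqrt (24 * (2 * a) - 1) / 6 := by rw [l]
  -- lower bound on LHS
  have hLHS : 2 * l a - l (2 * a) ≥ 0.306713 * t - 0.008954 := by
    rw [hla, hl2a]
    have h1 : Real.pi * Real.sqrt (24 * (2 * a) - 1) ≤ Real.pi * (Real.sqrt 2 * t + 0.0171) :=
      mul_le_mul_of_nonneg_left h48 (by positivity)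
    nlinarith [mul_le_mul_of_nonneg_right hs2U (mul_pos Real.pi_pos (by linarith : (0:ℝ) < t)).le]
  -- l a is large
  have hlaL : (10.8384 : ℝ) ≤ l a := by rw [hla]; nlinarith
  have hz : (0.90773 : ℝ) ≤ 1 - 1 / l a := by
    have : 1 / l a ≤ 1 / 10.8384 := by
      apply one_div_le_one_div_of_le <;> linarith
    linarith [this]
  have hzU : 1 - 1 / l a ≤ 1 := by
    have : 0 < 1 / l a := by positivity
    linarith
  -- M a decomposition
  have hMval : M a = (Real.sqrt 3 * (1 - 1 / l a)) / t ^ 2 := by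
    rw [M, ht2]; ring
  have hs3pos : (0:ℝ) < Real.sqrt 3 := Real.sqrt_pos.2 (by norm_num)
  have hMpos : 0 < M a := by
    rw [hMval]
    apply div_pos (mul_pos hs3pos (by linarith)) (by nlinarith)
  have hlogM : Real.log (M a) = Real.log (Real.sqrt 3) + Real.log (1 - 1 / l a)
      - 2 * Real.log t := by
    rw [hMval, Real.log_div (by positivity) (by nlinarith), Real.log_mul (by positivity)
      (by linarith), Real.log_pow]
    push_cast; ring
  -- log √3 ≥ 0.54874
  have hlog2L := Real.log_two_gt_d9
  have hlog2U := Real.log_two_lt_d9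
  have hlog3 : Real.log 3 ≥ 19 / 12 * Real.log 2 := by
    have h : Real.log ((2:ℝ) ^ 19) ≤ Real.log ((3:ℝ) ^ 12) :=
      Real.log_le_log (by positivity) (by norm_num)
    rw [Real.log_pow, Real.log_pow] at h
    push_cast at h
    linarith
  have hlogs3 : Real.log (Real.sqrt 3) ≥ 0.54874 := by
    rw [Real.log_sqrt (by norm_num)]
    linarith
  -- log (1 - 1/l a) ≥ -0.1017
  have hlogz : Real.log (1 - 1 / l a) ≥ -0.10165 := by
    have hzpos : (0:ℝ) < 1 - 1 / l a := by linarith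
    have h := Real.log_le_sub_one_of_pos (show (0:ℝ) < (1 - 1 / l a)⁻¹ by positivity)
    rw [Real.log_inv] at h
    have hinv : (1 - 1 / l a)⁻¹ ≤ 1 / 0.90773 := by
      rw [inv_eq_one_div]
      apply one_div_le_one_div_of_le <;> linarith
    nlinarith
  -- 2 log t ≤ 8.8 log 2 + 2t/21 - 2
  have hlogt : 2 * Real.log t ≤ 8.8 * Real.log 2 + 2 * t / 21 - 2 := by
    have h21 : Real.log 21 ≤ 22 / 5 * Real.log 2 := by
      have h : Real.log ((21:ℝ) ^ 5) ≤ Real.log ((2:ℝ) ^ 22) :=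
        Real.log_le_log (by positivity) (by norm_num)
      rw [Real.log_pow, Real.log_pow] at h
      push_cast at h
      linarith
    have htan : Real.log (t / 21) ≤ t / 21 - 1 :=
      Real.log_le_sub_one_of_pos (by positivity)
    rw [Real.log_div (by positivity) (by norm_num)] at htan
    linarith
  -- log S ≤ log 2
  have hsa : (4.2426 : ℝ) ≤ Real.sqrt a := by
    have : Real.sqrt 18 ≤ Real.sqrt a := Real.sqrt_le_sqrt ha
    nlinarith [Real.sq_sqrt (show (0:ℝ) ≤ 18 by norm_num), Real.sqrt_nonneg (18:ℝ),
      this, Real.sqrt_nonneg a]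
  have hs2a : (6 : ℝ) ≤ Real.sqrt (2 * a) := by
    have h36 : Real.sqrt 36 ≤ Real.sqrt (2 * a) := Real.sqrt_le_sqrt (by linarith)
    have : Real.sqrt 36 = 6 := by
      rw [show (36:ℝ) = 6 ^ 2 by norm_num, Real.sqrt_sq (by norm_num)]
    linarith
  have hu : 1 / Real.sqrt a ≤ 0.23571 := by
    rw [div_le_iff₀ (by linarith)]; nlinarith
  have hu0 : 0 < 1 / Real.sqrt a := by positivity
  have hv : 1 / Real.sqrt (2 * a) ≤ 1 / 6 := by
    apply one_div_le_one_div_of_le <;> linarith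
  have hv0 : 0 < 1 / Real.sqrt (2 * a) := by positivity
  have hden : (0:ℝ) < (1 - 1 / Real.sqrt a) ^ 2 := by nlinarith
  have hS2 : (1 + 1 / Real.sqrt (2 * a)) / (1 - 1 / Real.sqrt a) ^ 2 ≤ 2 := by
    rw [div_le_iff₀ hden]; nlinarith
  have hSpos : 0 < (1 + 1 / Real.sqrt (2 * a)) / (1 - 1 / Real.sqrt a) ^ 2 := by
    apply div_pos (by linarith) hden
  have hlogS : Real.log ((1 + 1 / Real.sqrt (2 * a)) / (1 - 1 / Real.sqrt a) ^ 2)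
      ≤ Real.log 2 := Real.log_le_log hSpos hS2
  -- combine
  rw [gt_iff_lt, hlogM]
  linarith [hLHS, hlogS, hlogs3, hlogz, hlogt, hlog2U, ht]
end
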